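/- arXiv:2208.06930 — 2 statements merged into one kernel-verified Lean document; each statement's English description precedes it below -/
import Mathlib

section
/- Let τ > 0, r ∈ ℝ, and let f* : ℝ → ℝ be a nonnegative continuous probability density supported on (0,∞) with ∫₀^∞ s f*(s) ds < ∞. Define C(K) = e^{−rτ} ∫_K^∞ (s − K) f*(s) ds for K > 0. Then C is twice differentiable on (0,∞) and C″(K) = e^{−rτ} f*(K) for every K > 0; in particular the risk-neutral density is recovered from the convexity of option prices: f*(K) = e^{rτ} C″(K). -/
open MeasureTheory Set


lemma tail_integral_hasDerivAt
    (g : ℝ → ℝ) (hg_cont : Continuous g)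
    (hg_int : IntegrableOn g (Ioi (0 : ℝ)))
    (K : ℝ) (hK : 0 < K) :
    HasDerivAt (fun x => ∫ s in Ioi x, g s) (-(g K)) K := by
  have heq : ∀ x ∈ Ioi (0:ℝ),
      ∫ s in Ioi x, g s = (∫ s in Ioi (0:ℝ), g s) - ∫ s in (0:ℝ)..x, g s := by
    intro x hx
    have hx0 : (0:ℝ) ≤ x := le_of_lt hx
    have hsplit : (∫ s in Ioc (0:ℝ) x, g s) + ∫ s in Ioi x, g s
        = ∫ s in Ioi (0:ℝ), g s := by
      rw [← setIntegral_union (Ioc_disjoint_Ioi le_rfl) measurableSet_Ioi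
        (hg_int.mono_set Ioc_subset_Ioi_self) (hg_int.mono_set (Ioi_subset_Ioi hx0)),
        Ioc_union_Ioi_eq_Ioi hx0]
    rw [intervalIntegral.integral_of_le hx0]
    linarith
  have hint : IntervalIntegrable g volume 0 K := hg_cont.intervalIntegrable 0 K
  have hd : HasDerivAt (fun x => (∫ s in Ioi (0:ℝ), g s) - ∫ s in (0:ℝ)..x, g s)
      (-(g K)) K := by
    have := (intervalIntegral.integral_hasDerivAt_right hint
      (hg_cont.stronglyMeasurableAtFilter _ _) hg_cont.continuousAt)
    simpa using (this.const_sub (∫ s in Ioi (0:ℝ), g s))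
  exact hd.congr_of_eventuallyEq <|
    Filter.eventuallyEq_of_mem (isOpen_Ioi.mem_nhds hK) heq

/-- Breeden–Litzenberger: the call-price function is twice differentiable on `(0,∞)`
with `C″(K) = e^{−rτ} f*(K)`, so the risk-neutral density is recovered from the
convexity of option prices: `f*(K) = e^{rτ} C″(K)`. -/
theorem breeden_litzenberger
    (τ r : ℝ) (hτ : 0 < τ)
    (f : ℝ → ℝ)
    (hf_nonneg : ∀ s, 0 ≤ f s)
    (hf_cont : Continuous f)
    (hf_supp : ∀ s ≤ (0 : ℝ), f s = 0)
    (hf_prob : ∫ s in Ioi (0 : ℝ), f s = 1)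
    (hf_mom : IntegrableOn (fun s => s * f s) (Ioi (0 : ℝ)))
    (C : ℝ → ℝ)
    (hC : ∀ K, C K = Real.exp (-r * τ) * ∫ s in Ioi K, (s - K) * f s) :
    ∀ K > (0 : ℝ),
      DifferentiableAt ℝ C K ∧
      HasDerivAt (deriv C) (Real.exp (-r * τ) * f K) K ∧
      f K = Real.exp (r * τ) * deriv (deriv C) K := by
  set e := Real.exp (-r * τ) with he
  -- f is integrable on Ioi 0
  have hfi : IntegrableOn f (Ioi (0:ℝ)) := by
    have h1 : IntegrableOn f (Ioc (0:ℝ) 1) :=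
      (hf_cont.integrableOn_Icc (a := 0) (b := 1)).mono_set Ioc_subset_Icc_self
    have h2 : IntegrableOn f (Ioi (1:ℝ)) := by
      refine (hf_mom.mono_set (Ioi_subset_Ioi zero_le_one)).mono'
        (hf_cont.aestronglyMeasurable.restrict) ?_
      filter_upwards [ae_restrict_mem measurableSet_Ioi] with s hs
      rw [Real.norm_eq_abs, abs_of_nonneg (hf_nonneg s)]
      nlinarith [hf_nonneg s, le_of_lt (mem_Ioi.mp hs)]
    have := h1.union h2
    rwa [Ioc_union_Ioi_eq_Ioi (zero_le_one)] at this
  set A : ℝ → ℝ := fun x => ∫ s in Ioi x, s * f s with hA_def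
  set B : ℝ → ℝ := fun x => ∫ s in Ioi x, f s with hB_def
  have hA : ∀ K > (0:ℝ), HasDerivAt A (-(K * f K)) K := fun K hK =>
    tail_integral_hasDerivAt _ (continuous_id.mul hf_cont) hf_mom K hK
  have hB : ∀ K > (0:ℝ), HasDerivAt B (-(f K)) K := fun K hK =>
    tail_integral_hasDerivAt _ hf_cont hfi K hK
  -- C rewritten
  have hCeq : ∀ x ∈ Ioi (0:ℝ), C x = e * (A x - x * B x) := by
    intro x hx
    have hx0 : (0:ℝ) ≤ x := le_of_lt hx
    have hfix : IntegrableOn f (Ioi x) := hfi.mono_set (Ioi_subset_Ioi hx0)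
    have hsfix : IntegrableOn (fun s => s * f s) (Ioi x) :=
      hf_mom.mono_set (Ioi_subset_Ioi hx0)
    rw [hC x]
    congr 1
    have : ∀ s, (s - x) * f s = s * f s - x * f s := by intro s; ring
    simp_rw [this]
    rw [integral_sub hsfix (hfix.const_mul x), MeasureTheory.integral_const_mul]
  -- first derivative of C
  have hC' : ∀ K > (0:ℝ), HasDerivAt C (-(e * B K)) K := by
    intro K hK
    have hd : HasDerivAt (fun x => e * (A x - x * B x))
        (e * ((-(K * f K)) - (1 * B K + K * (-(f K))))) K :=
      ((hA K hK).sub ((hasDerivAt_id K).mul (hB K hK))).const_mul e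
    have hd2 : HasDerivAt (fun x => e * (A x - x * B x)) (-(e * B K)) K := by
      convert hd using 1; ring
    exact hd2.congr_of_eventuallyEq <|
      Filter.eventuallyEq_of_mem (isOpen_Ioi.mem_nhds hK) hCeq
  intro K hK
  have hderivC : deriv C =ᶠ[nhds K] fun x => -(e * B x) := by
    filter_upwards [isOpen_Ioi.mem_nhds hK] with x hx
    exact (hC' x hx).deriv
  have h2 : HasDerivAt (deriv C) (e * f K) K := by
    have hd : HasDerivAt (fun x => -(e * B x)) (-(e * (-(f K)))) K :=
      (((hB K hK).const_mul e).neg)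
    have hd2 : HasDerivAt (fun x => -(e * B x)) (e * f K) K := by
      convert hd using 1; ring
    exact hd2.congr_of_eventuallyEq hderivC
  refine ⟨(hC' K hK).differentiableAt, h2, ?_⟩
  rw [h2.deriv, he, ← mul_assoc, ← Real.exp_add]
  ring_nf
  simp
end

section
/- (Proposition 1: sensitivity of state prices with respect to the wildfire-exposed stock.) Let T > 0, σ > 0, σ^w > 0, γ > 0, q, q^w, β, μ, α, r ∈ ℝ, W₀ > 0, S₀^w > 0, and let G and G^w be independent real-valued centered Gaussian random variables with variance T on a probability space. Define the terminal wildfire-exposed stock price by log S_T^w = log S₀^w + (α + βμ − β²σ²/2 − (σ^w)²/2)T + βσG + σ^w G^w, the terminal wealth of a constant-proportions investor by W_T = W₀ · exp( (q(μ − r) + q^w(α + βμ − r) + r − q²σ²/2)T + (q + βq^w)σG + q^w σ^w G^w ), and the pricing kernel by ζ_T = W_T^{−γ} (the marginal utility of CRRA terminal utility u(w) = w^{1−γ}/(1−γ)). Then ζ_T is integrable and there exists a constant c ∈ ℝ such that, almost surely, E[ζ_T | σ(S_T^w)] = e^c · (S_T^w)^{−γ^w}, where γ^w = γ · ( q^w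 + q · βσ²/(β²σ² + (σ^w)²) ). Equivalently, writing ρ = βσ/√(β²σ² + (σ^w)²) for the correlation between the log returns of the wildfire-exposed stock and the index and σ̃^w = √(β²σ² + (σ^w)²) for the total volatility of the wildfire-exposed stock, the elasticity of the conditional pricing kernel with respect to the stock satisfies γ^w = (q^w + ρ(σ/σ̃^w) q) · γ; in particular the Arrow–Pratt risk aversion with respect to the wildfire-exposed stock is proportional to the relative risk aversion γ with respect to wealth, with proportionality constant q^w + ρ(σ/σ̃^w)q. -/
open MeasureTheory ProbabilityTheory

open scoped ENNReal NNReal Real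

namespace WildfireAux

lemma pdf_tilt {T : ℝ} (hT : 0 < T) (u x : ℝ) :
    gaussianPDFReal 0 T.toNNReal x * rexp (u * x)
      = rexp (u ^ 2 * T / 2) * gaussianPDFReal (u * T) T.toNNReal x := by
  have hTc : ((T.toNNReal : ℝ)) = T := Real.coe_toNNReal T hT.le
  simp only [gaussianPDFReal, hTc, sub_zero]
  conv_lhs => rw [mul_assoc, ← Real.exp_add]
  conv_rhs => rw [mul_comm, mul_assoc, ← Real.exp_add]
  congr 1
  field_simp
  ring

lemma lintegral_tilt {T : ℝ} (hT : 0 < T) (u : ℝ) {g : ℝ → ℝ≥0∞} (hg : Measurable g) :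
    ∫⁻ x, g x * ENNReal.ofReal (rexp (u * x)) ∂(gaussianReal 0 T.toNNReal)
      = ENNReal.ofReal (rexp (u ^ 2 * T / 2))
          * ∫⁻ x, g (x + u * T) ∂(gaussianReal 0 T.toNNReal) := by
  have hT0 : T.toNNReal ≠ 0 := by
    simp only [ne_eq, Real.toNNReal_eq_zero, not_le]; exact hT
  have hexp : Measurable fun x : ℝ => ENNReal.ofReal (rexp (u * x)) :=
    ((measurable_id'.const_mul u).exp).ennreal_ofReal
  rw [gaussianReal_of_var_ne_zero _ hT0,
    lintegral_withDensity_eq_lintegral_mul _ (measurable_gaussianPDF _ _)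
      (show Measurable fun x => g x * ENNReal.ofReal (rexp (u * x)) from hg.mul hexp),
    lintegral_withDensity_eq_lintegral_mul _ (measurable_gaussianPDF _ _)
      (show Measurable fun x => g (x + u * T) from hg.comp (measurable_add_const _))]
  have step : ∀ x, (gaussianPDF 0 T.toNNReal * fun x => g x * ENNReal.ofReal (rexp (u * x))) x
      = ENNReal.ofReal (rexp (u ^ 2 * T / 2)) * (gaussianPDF (u * T) T.toNNReal x * g x) := by
    intro x
    simp only [Pi.mul_apply, gaussianPDF]
    calc ENNReal.ofReal (gaussianPDFReal 0 T.toNNReal x) * (g x * ENNReal.ofReal (rexp (u * x)))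
        = ENNReal.ofReal (gaussianPDFReal 0 T.toNNReal x * rexp (u * x)) * g x := by
          rw [ENNReal.ofReal_mul (gaussianPDFReal_nonneg _ _ _)]; ring
      _ = ENNReal.ofReal (rexp (u ^ 2 * T / 2) * gaussianPDFReal (u * T) T.toNNReal x) * g x := by
          rw [pdf_tilt hT]
      _ = ENNReal.ofReal (rexp (u ^ 2 * T / 2))
            * (ENNReal.ofReal (gaussianPDFReal (u * T) T.toNNReal x) * g x) := by
          rw [ENNReal.ofReal_mul (Real.exp_nonneg _)]; ring
  rw [lintegral_congr step,
    lintegral_const_mul _ (show Measurable fun x => gaussianPDF (u * T) T.toNNReal x * g x from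
      (measurable_gaussianPDF _ _).mul hg)]
  congr 1
  have htrans := lintegral_add_right_eq_self (μ := volume)
    (fun x => gaussianPDF (u * T) T.toNNReal x * g x) (u * T)
  rw [← htrans]
  refine lintegral_congr fun x => ?_
  have h2 : gaussianPDF (u * T) T.toNNReal (x + u * T) = gaussianPDF 0 T.toNNReal x := by
    simp [gaussianPDF, gaussianPDFReal_add, sub_self]
  simp only [Pi.mul_apply, h2]

lemma lintegral_tilt2 {T : ℝ} (hT : 0 < T) (u v : ℝ) {f : ℝ × ℝ → ℝ≥0∞} (hf : Measurable f) :
    ∫⁻ p, f p * ENNReal.ofReal (rexp (u * p.1 + v * p.2))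
        ∂((gaussianReal 0 T.toNNReal).prod (gaussianReal 0 T.toNNReal))
      = ENNReal.ofReal (rexp ((u ^ 2 + v ^ 2) * T / 2))
          * ∫⁻ p, f (p.1 + u * T, p.2 + v * T)
              ∂((gaussianReal 0 T.toNNReal).prod (gaussianReal 0 T.toNNReal)) := by
  set ν := gaussianReal 0 T.toNNReal with hν
  have hexp : Measurable fun p : ℝ × ℝ => ENNReal.ofReal (rexp (u * p.1 + v * p.2)) :=
    (((measurable_fst.const_mul u).add (measurable_snd.const_mul v)).exp).ennreal_ofReal
  have hshift : Measurable fun p : ℝ × ℝ => f (p.1 + u * T, p.2 + v * T) :=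
    hf.comp ((measurable_fst.add_const _).prodMk (measurable_snd.add_const _))
  have hshift2 : Measurable fun p : ℝ × ℝ => f (p.1, p.2 + v * T) :=
    hf.comp (measurable_fst.prodMk (measurable_snd.add_const _))
  have hH : Measurable fun x : ℝ => ∫⁻ y, f (x, y + v * T) ∂ν :=
    hshift2.lintegral_prod_right'
  rw [lintegral_prod _ (show Measurable fun p : ℝ × ℝ => f p * ENNReal.ofReal (rexp (u * p.1 + v * p.2)) from
    hf.mul hexp).aemeasurable]
  have inner : ∀ x : ℝ, ∫⁻ y, f (x, y) * ENNReal.ofReal (rexp (u * x + v * y)) ∂ν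
      = ENNReal.ofReal (rexp (v ^ 2 * T / 2))
          * ((∫⁻ y, f (x, y + v * T) ∂ν) * ENNReal.ofReal (rexp (u * x))) := by
    intro x
    have hfy : Measurable fun y => f (x, y) := hf.comp measurable_prodMk_left
    have h1 : ∀ y : ℝ, f (x, y) * ENNReal.ofReal (rexp (u * x + v * y))
        = (f (x, y) * ENNReal.ofReal (rexp (v * y))) * ENNReal.ofReal (rexp (u * x)) := by
      intro y
      rw [Real.exp_add, ENNReal.ofReal_mul (Real.exp_nonneg _)]
      ring
    rw [lintegral_congr h1,
      lintegral_mul_const _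
        (show Measurable fun y => f (x, y) * ENNReal.ofReal (rexp (v * y)) from
          hfy.mul ((measurable_id'.const_mul v).exp.ennreal_ofReal)),
      lintegral_tilt hT v hfy, mul_assoc]
  rw [lintegral_congr inner,
    lintegral_const_mul _
      (show Measurable fun x : ℝ =>
          (∫⁻ y, f (x, y + v * T) ∂ν) * ENNReal.ofReal (rexp (u * x)) from
        hH.mul ((measurable_id'.const_mul u).exp.ennreal_ofReal)),
    lintegral_tilt hT u hH,
    lintegral_prod _ hshift.aemeasurable]
  rw [← mul_assoc, ← ENNReal.ofReal_mul (Real.exp_nonneg _), ← Real.exp_add]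
  congr 3
  ring

end WildfireAux

namespace WildfireAux

lemma main_calc {Ω : Type*} [MeasurableSpace Ω] (P : Measure Ω) [IsProbabilityMeasure P]
    {T : ℝ} (hT : 0 < T) {G Gw : Ω → ℝ}
    (hGmeas : Measurable G) (hGwmeas : Measurable Gw)
    (hmap : Measure.map (fun ω => (G ω, Gw ω)) P
      = (gaussianReal 0 T.toNNReal).prod (gaussianReal 0 T.toNNReal))
    (bb dd Z w1 w2 : ℝ) (hZ : 0 ≤ Z) :
    Integrable (fun ω => Z * rexp (w1 * G ω + w2 * Gw ω)) P ∧
    ∀ B' : Set ℝ, MeasurableSet B' →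
      ∫ ω in (fun ω => bb * G ω + dd * Gw ω) ⁻¹' B', Z * rexp (w1 * G ω + w2 * Gw ω) ∂P
        = (ENNReal.ofReal Z * ENNReal.ofReal (rexp ((w1 ^ 2 + w2 ^ 2) * T / 2))
            * ∫⁻ p : ℝ × ℝ,
                (B'.indicator (fun _ => (1 : ℝ≥0∞)) (bb * p.1 + dd * p.2 + (w1 * bb + w2 * dd) * T))
                ∂((gaussianReal 0 T.toNNReal).prod (gaussianReal 0 T.toNNReal))).toReal := by
  have hpair : Measurable fun ω => (G ω, Gw ω) := hGmeas.prodMk hGwmeas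
  have hexpω : Measurable fun ω => rexp (w1 * G ω + w2 * Gw ω) :=
    ((hGmeas.const_mul w1).add (hGwmeas.const_mul w2)).exp
  have hexpP : Measurable fun p : ℝ × ℝ => ENNReal.ofReal (rexp (w1 * p.1 + w2 * p.2)) :=
    (((measurable_fst.const_mul w1).add (measurable_snd.const_mul w2)).exp).ennreal_ofReal
  constructor
  · refine ⟨(hexpω.const_mul Z).aestronglyMeasurable, ?_⟩
    show (∫⁻ ω, (‖Z * rexp (w1 * G ω + w2 * Gw ω)‖₊ : ℝ≥0∞) ∂P) < ∞
    have hnn : ∀ ω, ((‖Z * rexp (w1 * G ω + w2 * Gw ω)‖₊ : ℝ≥0∞))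
        = ENNReal.ofReal |Z| * ENNReal.ofReal (rexp (w1 * G ω + w2 * Gw ω)) := by
      intro ω
      rw [nnnorm_mul, ENNReal.coe_mul, ← enorm_eq_nnnorm, ← enorm_eq_nnnorm, Real.enorm_eq_ofReal_abs,
        Real.enorm_eq_ofReal (Real.exp_nonneg _)]
    rw [lintegral_congr hnn, lintegral_const_mul _ hexpω.ennreal_ofReal]
    have h2 : ∫⁻ ω, ENNReal.ofReal (rexp (w1 * G ω + w2 * Gw ω)) ∂P
        = ∫⁻ p : ℝ × ℝ, ENNReal.ofReal (rexp (w1 * p.1 + w2 * p.2))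
            ∂((gaussianReal 0 T.toNNReal).prod (gaussianReal 0 T.toNNReal)) := by
      rw [← hmap, lintegral_map hexpP hpair]
    rw [h2, lintegral_congr (fun p : ℝ × ℝ =>
      (one_mul (ENNReal.ofReal (rexp (w1 * p.1 + w2 * p.2)))).symm),
      lintegral_tilt2 hT w1 w2 measurable_const]
    simp only [lintegral_const, measure_univ, mul_one, one_mul]
    exact ENNReal.mul_lt_top ENNReal.ofReal_lt_top ENNReal.ofReal_lt_top
  · intro B' hB'
    have hXmeas : Measurable fun ω => bb * G ω + dd * Gw ω :=
      (hGmeas.const_mul bb).add (hGwmeas.const_mul dd)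
    have hsmeas : MeasurableSet ((fun ω => bb * G ω + dd * Gw ω) ⁻¹' B') := hXmeas hB'
    have hindmeas : Measurable fun p : ℝ × ℝ =>
        B'.indicator (fun _ => (1 : ℝ≥0∞)) (bb * p.1 + dd * p.2) :=
      (measurable_const.indicator hB').comp
        ((measurable_fst.const_mul bb).add (measurable_snd.const_mul dd))
    have hmeasH : Measurable fun ω =>
        Set.indicator ((fun ω => bb * G ω + dd * Gw ω) ⁻¹' B')
          (fun ω => Z * rexp (w1 * G ω + w2 * Gw ω)) ω :=
      (hexpω.const_mul Z).indicator hsmeas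
    rw [← integral_indicator hsmeas,
      integral_eq_lintegral_of_nonneg_ae
        (ae_of_all _ fun ω => Set.indicator_nonneg
          (fun _ _ => mul_nonneg hZ (Real.exp_nonneg _)) ω)
        hmeasH.aestronglyMeasurable]
    congr 1
    have hpt : ∀ ω, ENNReal.ofReal
        (Set.indicator ((fun ω => bb * G ω + dd * Gw ω) ⁻¹' B')
          (fun ω => Z * rexp (w1 * G ω + w2 * Gw ω)) ω)
        = (fun p : ℝ × ℝ => B'.indicator (fun _ => (1 : ℝ≥0∞)) (bb * p.1 + dd * p.2)
            * (ENNReal.ofReal Z * ENNReal.ofReal (rexp (w1 * p.1 + w2 * p.2)))) (G ω, Gw ω) := by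
      intro ω
      simp only [Set.indicator_apply, Set.mem_preimage]
      by_cases hω : bb * G ω + dd * Gw ω ∈ B'
      · simp [hω, ENNReal.ofReal_mul hZ]
      · simp [hω]
    have hLHS : ∫⁻ a, (fun p : ℝ × ℝ => B'.indicator (fun _ => (1 : ℝ≥0∞)) (bb * p.1 + dd * p.2)
            * (ENNReal.ofReal Z * ENNReal.ofReal (rexp (w1 * p.1 + w2 * p.2)))) (G a, Gw a) ∂P
        = ∫⁻ p : ℝ × ℝ, B'.indicator (fun _ => (1 : ℝ≥0∞)) (bb * p.1 + dd * p.2)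
            * (ENNReal.ofReal Z * ENNReal.ofReal (rexp (w1 * p.1 + w2 * p.2)))
            ∂((gaussianReal 0 T.toNNReal).prod (gaussianReal 0 T.toNNReal)) := by
      rw [← hmap]
      exact (lintegral_map (hindmeas.mul (measurable_const.mul hexpP)) hpair).symm
    rw [lintegral_congr hpt, hLHS,
      lintegral_congr (fun p : ℝ × ℝ => show
        B'.indicator (fun _ => (1 : ℝ≥0∞)) (bb * p.1 + dd * p.2)
            * (ENNReal.ofReal Z * ENNReal.ofReal (rexp (w1 * p.1 + w2 * p.2)))
          = ENNReal.ofReal Z * (B'.indicator (fun _ => (1 : ℝ≥0∞)) (bb * p.1 + dd * p.2)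
              * ENNReal.ofReal (rexp (w1 * p.1 + w2 * p.2))) by ring),
      lintegral_const_mul _ (show Measurable fun p : ℝ × ℝ => B'.indicator (fun _ => (1 : ℝ≥0∞)) (bb * p.1 + dd * p.2)
          * ENNReal.ofReal (rexp (w1 * p.1 + w2 * p.2)) from hindmeas.mul hexpP),
      lintegral_tilt2 hT w1 w2 hindmeas, ← mul_assoc]
    congr 1
    refine lintegral_congr fun p => ?_
    congr 1
    ring

end WildfireAux


/-- Proposition 1 (sensitivity of state prices with respect to the wildfire-exposed
stock): in the two-asset Merton model with CRRA terminal utility, the pricing kernel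
`ζ_T = W_T^{−γ}` is integrable and its conditional expectation given the terminal
wildfire-exposed stock price is `e^c (S_T^w)^{−γ^w}` with
`γ^w = γ(q^w + q·βσ²/(β²σ² + (σ^w)²))`; equivalently,
`γ^w = (q^w + ρ(σ/σ̃^w)q)·γ` where `ρ = βσ/√(β²σ² + (σ^w)²)` and
`σ̃^w = √(β²σ² + (σ^w)²)`. -/
theorem state_price_sensitivity_wildfire_stock
    {Ω : Type*} [MeasurableSpace Ω] (P : Measure Ω) [IsProbabilityMeasure P]
    (T σ σw γ q qw β μ α r W₀ S₀w : ℝ)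
    (hT : 0 < T) (hσ : 0 < σ) (hσw : 0 < σw) (hγ : 0 < γ)
    (hW₀ : 0 < W₀) (hS₀w : 0 < S₀w)
    (G Gw : Ω → ℝ)
    (hGmeas : Measurable G) (hGwmeas : Measurable Gw)
    (hindep : IndepFun G Gw P)
    (hG : Measure.map G P = gaussianReal 0 T.toNNReal)
    (hGw : Measure.map Gw P = gaussianReal 0 T.toNNReal)
    (STw W ζ : Ω → ℝ)
    (hSTw : ∀ ω, STw ω =
      S₀w * Real.exp ((α + β * μ - β ^ 2 * σ ^ 2 / 2 - σw ^ 2 / 2) * T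
        + β * σ * G ω + σw * Gw ω))
    (hW : ∀ ω, W ω =
      W₀ * Real.exp ((q * (μ - r) + qw * (α + β * μ - r) + r - q ^ 2 * σ ^ 2 / 2) * T
        + (q + β * qw) * σ * G ω + qw * σw * Gw ω))
    (hζ : ∀ ω, ζ ω = W ω ^ (-γ))
    (γw : ℝ)
    (hγw : γw = γ * (qw + q * (β * σ ^ 2 / (β ^ 2 * σ ^ 2 + σw ^ 2)))) :
    Integrable ζ P ∧
      (∃ c : ℝ,
        P[ζ | MeasurableSpace.comap STw inferInstance] =ᵐ[P]
          (fun ω => Real.exp c * STw ω ^ (-γw))) ∧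
      γw =
        (qw + (β * σ / Real.sqrt (β ^ 2 * σ ^ 2 + σw ^ 2)) *
            (σ / Real.sqrt (β ^ 2 * σ ^ 2 + σw ^ 2)) * q) * γ := by
  have hs0 : (0:ℝ) < β ^ 2 * σ ^ 2 + σw ^ 2 := by positivity
  have hsne : (β ^ 2 * σ ^ 2 + σw ^ 2) ≠ 0 := hs0.ne'
  -- third conjunct
  have hpart3 : γw = (qw + (β * σ / Real.sqrt (β ^ 2 * σ ^ 2 + σw ^ 2)) *
      (σ / Real.sqrt (β ^ 2 * σ ^ 2 + σw ^ 2)) * q) * γ := by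
    have hsq : Real.sqrt (β ^ 2 * σ ^ 2 + σw ^ 2) * Real.sqrt (β ^ 2 * σ ^ 2 + σw ^ 2)
        = β ^ 2 * σ ^ 2 + σw ^ 2 := Real.mul_self_sqrt hs0.le
    rw [hγw, div_mul_div_comm, hsq]
    field_simp
  -- abbreviations
  obtain ⟨uu, huu⟩ : ∃ x : ℝ, x = -(γ * ((q + β * qw) * σ)) := ⟨_, rfl⟩
  obtain ⟨vv, hvv⟩ : ∃ x : ℝ, x = -(γ * (qw * σw)) := ⟨_, rfl⟩
  obtain ⟨w1, hw1⟩ : ∃ x : ℝ, x = -(γw * (β * σ)) := ⟨_, rfl⟩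
  obtain ⟨w2, hw2⟩ : ∃ x : ℝ, x = -(γw * σw) := ⟨_, rfl⟩
  obtain ⟨Z₀, hZ₀def⟩ : ∃ x : ℝ, x = W₀ ^ (-γ)
      * Real.exp (-(γ * ((q * (μ - r) + qw * (α + β * μ - r) + r - q ^ 2 * σ ^ 2 / 2) * T))) :=
    ⟨_, rfl⟩
  have hZ₀pos : 0 < Z₀ := by
    rw [hZ₀def]; exact mul_pos (Real.rpow_pos_of_pos hW₀ _) (Real.exp_pos _)
  obtain ⟨C₀, hC₀def⟩ : ∃ x : ℝ, x = Z₀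
      * Real.exp ((uu ^ 2 + vv ^ 2) * T / 2 - (w1 ^ 2 + w2 ^ 2) * T / 2) := ⟨_, rfl⟩
  have hC₀pos : 0 < C₀ := by
    rw [hC₀def]; exact mul_pos hZ₀pos (Real.exp_pos _)
  obtain ⟨cc, hcc⟩ : ∃ x : ℝ, x = Real.log C₀ + γw * Real.log S₀w
      + γw * ((α + β * μ - β ^ 2 * σ ^ 2 / 2 - σw ^ 2 / 2) * T) := ⟨_, rfl⟩
  -- measurability of STw
  have hSTwMeasAmb : Measurable STw := by
    have hfe : STw = fun ω => S₀w * Real.exp ((α + β * μ - β ^ 2 * σ ^ 2 / 2 - σw ^ 2 / 2) * T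
        + β * σ * G ω + σw * Gw ω) := funext hSTw
    rw [hfe]
    exact ((((hGmeas.const_mul (β * σ)).const_add _).add
      (hGwmeas.const_mul σw)).exp).const_mul S₀w
  have hm : MeasurableSpace.comap STw inferInstance ≤ (by infer_instance : MeasurableSpace Ω) :=
    hSTwMeasAmb.comap_le
  -- joint law
  have hmap : Measure.map (fun ω => (G ω, Gw ω)) P
      = (gaussianReal 0 T.toNNReal).prod (gaussianReal 0 T.toNNReal) := by
    have h := (indepFun_iff_map_prod_eq_prod_map_map hGmeas.aemeasurable
      hGwmeas.aemeasurable).mp hindep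
    rw [h, hG, hGw]
  obtain ⟨hint1, hset1⟩ := WildfireAux.main_calc P hT hGmeas hGwmeas hmap (β * σ) σw Z₀ uu vv hZ₀pos.le
  obtain ⟨hint2, hset2⟩ := WildfireAux.main_calc P hT hGmeas hGwmeas hmap (β * σ) σw C₀ w1 w2 hC₀pos.le
  -- function rewritings
  have hzeta_fun : ζ = fun ω => Z₀ * Real.exp (uu * G ω + vv * Gw ω) := by
    funext ω
    rw [hζ, hW, Real.mul_rpow hW₀.le (Real.exp_pos _).le,
      Real.rpow_def_of_pos (Real.exp_pos _), Real.log_exp, hZ₀def]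
    conv_rhs => rw [mul_assoc, ← Real.exp_add]
    congr 1
    rw [Real.exp_eq_exp, huu, hvv]
    ring
  have hcand_fun : (fun ω => Real.exp cc * STw ω ^ (-γw))
      = fun ω => C₀ * Real.exp (w1 * G ω + w2 * Gw ω) := by
    funext ω
    rw [hSTw, Real.mul_rpow hS₀w.le (Real.exp_pos _).le, Real.rpow_def_of_pos hS₀w,
      Real.rpow_def_of_pos (Real.exp_pos _), Real.log_exp, ← Real.exp_add, ← Real.exp_add,
      ← Real.exp_log hC₀pos, ← Real.exp_add, Real.exp_eq_exp, hcc, hw1, hw2]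
    ring
  -- shift identity
  have hshift : uu * (β * σ) + vv * σw = w1 * (β * σ) + w2 * σw := by
    rw [huu, hvv, hw1, hw2, hγw]
    field_simp
    ring
  have hζint : Integrable ζ P := by rw [hzeta_fun]; exact hint1
  have hgint : Integrable (fun ω => Real.exp cc * STw ω ^ (-γw)) P := by
    rw [hcand_fun]; exact hint2
  refine ⟨hζint, ⟨cc, ?_⟩, hpart3⟩
  refine (ae_eq_condExp_of_forall_setIntegral_eq hm hζint
    (fun s _ _ => hgint.integrableOn) (fun s hs _ => ?_) ?_).symm
  · -- set integral equality
    rw [MeasurableSpace.measurableSet_comap] at hs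
    obtain ⟨B, hB, rfl⟩ := hs
    have hpre : STw ⁻¹' B = (fun ω => β * σ * G ω + σw * Gw ω) ⁻¹'
        ((fun x => S₀w * Real.exp ((α + β * μ - β ^ 2 * σ ^ 2 / 2 - σw ^ 2 / 2) * T + x)) ⁻¹' B)
        := by
      ext ω
      simp only [Set.mem_preimage]
      rw [hSTw ω, ← add_assoc]
    have hB'meas : MeasurableSet ((fun x => S₀w
        * Real.exp ((α + β * μ - β ^ 2 * σ ^ 2 / 2 - σw ^ 2 / 2) * T + x)) ⁻¹' B) :=
      (((measurable_id'.const_add _).exp).const_mul S₀w) hB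
    rw [hpre, hcand_fun, hzeta_fun, hset1 _ hB'meas, hset2 _ hB'meas, ← hshift]
    congr 2
    rw [← ENNReal.ofReal_mul hC₀pos.le, ← ENNReal.ofReal_mul hZ₀pos.le]
    congr 1
    rw [hC₀def, mul_assoc, ← Real.exp_add, sub_add_cancel]
  · -- strong measurability w.r.t. comap
    have hSTw_m : Measurable[MeasurableSpace.comap STw inferInstance] STw :=
      fun t ht => ⟨t, ht, rfl⟩
    have hg_m : Measurable[MeasurableSpace.comap STw inferInstance]
        fun ω => Real.exp cc * STw ω ^ (-γw) :=
      (hSTw_m.pow_const _).const_mul _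
    exact ⟨_, hg_m.stronglyMeasurable, Filter.EventuallyEq.rfl⟩
end
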